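/- Let a be a complex number that is not an integer, and extend the Pochhammer symbol by (a)_{-j} = 1/(a-j)_j for j ≥ 1. Then for all natural numbers m, n: (a)_m/((1-a)_n) = ∑_{k=0}^{n} ∑_{l=0}^{min(k,m)} c_{k,l} · (-1)^{n-l} · (m!/(m-l)!) · (n!/(n-k)!) · (a-k+l)_{(m-l)-(n-k)} / ((1-a)_k (1-a)_{k-l}), where c_{0,0} = 1, c_{k,l} = (k-1)!/((l-1)! l! (k-l)!) for k ≥ 1 and 1 ≤ l ≤ k, and c_{k,0} = 0 for k ≥ 1. -/

import Mathlib

open Finset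

/-- Pochhammer symbol (rising factorial): `(a)_k = a (a+1) ⋯ (a+k-1)`. -/
noncomputable def poch (a : ℂ) (k : ℕ) : ℂ := ∏ j ∈ Finset.range k, (a + j)

/-- Generalized Pochhammer symbol for integer index:
`(a)_z` is the usual rising factorial for `z ≥ 0`, and `(a)_{-j} = 1/(a-j)_j`. -/
noncomputable def pochZ (a : ℂ) : ℤ → ℂ
  | Int.ofNat k => poch a k
  | Int.negSucc j => 1 / poch (a - (j + 1 : ℕ)) (j + 1)

/-- The coefficients `c_{k,l}`: `c_{0,0} = 1`, `c_{k,l} = (k-1)!/((l-1)! l! (k-l)!)` for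
`k ≥ 1, 1 ≤ l ≤ k`, and `c_{k,0} = 0` for `k ≥ 1`. -/
noncomputable def cCoeff (k l : ℕ) : ℂ :=
  if k = 0 then (if l = 0 then 1 else 0)
  else if l = 0 then 0
  else ((k - 1).factorial : ℂ) /
    (((l - 1).factorial : ℂ) * (l.factorial : ℂ) * ((k - l).factorial : ℂ))

lemma poch_zero (x : ℂ) : poch x 0 = 1 := by simp [poch]

lemma poch_succ (x : ℂ) (k : ℕ) : poch x (k+1) = poch x k * (x + k) := by
  simp [poch, Finset.prod_range_succ]

lemma poch_succ' (x : ℂ) (k : ℕ) : poch x (k+1) = x * poch (x+1) k := by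
  simp only [poch, Finset.prod_range_succ']
  rw [mul_comm]
  congr 1
  · push_cast; ring
  · apply Finset.prod_congr rfl; intro i _; push_cast; ring

lemma poch_one (x : ℂ) : poch x 1 = x := by simp [poch]

lemma poch_add (x : ℂ) (u v : ℕ) : poch x (u+v) = poch x u * poch (x+u) v := by
  simp only [poch, Finset.prod_range_add]
  congr 1
  apply Finset.prod_congr rfl; intro i _; push_cast; ring

lemma poch_ne_zero (x : ℂ) (hx : ∀ i : ℕ, x + i ≠ 0) (k : ℕ) : poch x k ≠ 0 := by
  apply Finset.prod_ne_zero_iff.2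
  intro i _; exact hx i

lemma poch_reflect (x : ℂ) (k : ℕ) : poch x k = (-1)^k * poch (1 - x - k) k := by
  simp only [poch]
  rw [← Finset.prod_range_reflect (fun j => (1 - x - (k:ℂ) + j))]
  rw [show ((-1:ℂ))^k = ∏ _j ∈ Finset.range k, (-1:ℂ) by simp, ← Finset.prod_mul_distrib]
  apply Finset.prod_congr rfl
  intro i hi
  have hik : (i:ℕ) < k := Finset.mem_range.1 hi
  have : ((k - 1 - i : ℕ) : ℂ) = (k:ℂ) - 1 - i := by
    rw [show k - 1 - i = k - (1+i) by omega, Nat.cast_sub (by omega)]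
    push_cast; ring
  rw [this]; ring

lemma poch_diff (b : ℂ) (j : ℕ) :
    poch b (j+1) - poch (b-1) (j+1) = (j+1) * poch b j := by
  rw [poch_succ, poch_succ' (b-1) j, show b - 1 + 1 = b by ring]
  ring

lemma pochZ_natCast (x : ℂ) (k : ℕ) : pochZ x (k : ℤ) = poch x k := rfl

lemma pochZ_zero (x : ℂ) : pochZ x 0 = 1 := by
  rw [show (0:ℤ) = ((0:ℕ):ℤ) by rfl, pochZ_natCast, poch_zero]

lemma pochZ_succ (x : ℂ) (hx : ∀ z : ℤ, x + z ≠ 0) (s : ℤ) :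
    pochZ x (s+1) = pochZ x s * (x + s) := by
  rcases s with u | u
  · rw [show Int.ofNat u + 1 = ((u+1 : ℕ) : ℤ) by rfl,
      show (Int.ofNat u : ℤ) = ((u:ℕ):ℤ) by rfl, pochZ_natCast, pochZ_natCast, poch_succ]
    push_cast; ring
  · rcases u with _ | u
    · rw [show Int.negSucc 0 + 1 = ((0:ℕ):ℤ) by rfl, pochZ_natCast, poch_zero]
      show 1 = 1 / poch (x - ((0:ℕ)+1 : ℕ)) (0+1) * (x + (Int.negSucc 0 : ℂ))
      rw [poch_one]
      have h1 : x - ((0:ℕ)+1 : ℕ) = x - 1 := by push_cast; ring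
      have h2 : x + (Int.negSucc 0 : ℂ) = x - 1 := by
        rw [show (Int.negSucc 0 : ℂ) = -1 by norm_cast]
        ring
      rw [h1, h2]
      have hne : x - 1 ≠ 0 := by
        have := hx (-1); intro h; apply this; push_cast; linear_combination h
      field_simp
    · rw [show Int.negSucc (u+1) + 1 = Int.negSucc u by rw [Int.negSucc_eq, Int.negSucc_eq]; omega]
      show 1 / poch (x - ((u:ℕ)+1 : ℕ)) (u+1)
        = 1 / poch (x - ((u+1:ℕ)+1 : ℕ)) ((u+1)+1) * (x + (Int.negSucc (u+1) : ℂ))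
      have hc : x + (Int.negSucc (u+1) : ℂ) = x - ((u:ℕ)+2) := by
        rw [show (Int.negSucc (u+1) : ℂ) = -((u:ℂ)+2) by push_cast [Int.cast_negSucc]; ring]
        ring
      have hb : poch (x - ((u+1:ℕ)+1 : ℕ)) ((u+1)+1)
          = (x - ((u:ℕ)+2)) * poch (x - ((u:ℕ)+1:ℕ)) (u+1) := by
        rw [poch_succ']
        congr 2
        · push_cast; ring
        · push_cast; ring
      have hne : x - ((u:ℕ)+2) ≠ 0 := by
        have := hx (-(u+2)); intro h; apply this; push_cast; linear_combination h
      rw [hc, hb]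
      have : 1 / ((x - ((u:ℕ)+2)) * poch (x - ((u:ℕ)+1:ℕ)) (u+1)) * (x - ((u:ℕ)+2))
          = ((x - ((u:ℕ)+2)) * 1) / ((x - ((u:ℕ)+2)) * poch (x - ((u:ℕ)+1:ℕ)) (u+1)) := by
        ring
      rw [this, mul_div_mul_left _ _ hne]

lemma pochZ_pred (x : ℂ) (hne : x - 1 ≠ 0) (s : ℤ) :
    pochZ (x-1) (s+1) = (x-1) * pochZ x s := by
  rcases s with u | u
  · rw [show Int.ofNat u + 1 = ((u+1 : ℕ) : ℤ) by rfl,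
      show (Int.ofNat u : ℤ) = ((u:ℕ):ℤ) by rfl, pochZ_natCast, pochZ_natCast, poch_succ',
      show x - 1 + 1 = x by ring]
  · rcases u with _ | u
    · rw [show Int.negSucc 0 + 1 = ((0:ℕ):ℤ) by rfl, pochZ_natCast, poch_zero]
      show (1:ℂ) = (x-1) * (1 / poch (x - ((0:ℕ)+1 : ℕ)) (0+1))
      rw [poch_one, show x - ((0:ℕ)+1 : ℕ) = x - 1 by push_cast; ring]
      field_simp
    · rw [show Int.negSucc (u+1) + 1 = Int.negSucc u by rw [Int.negSucc_eq, Int.negSucc_eq]; omega]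
      show 1 / poch ((x-1) - ((u:ℕ)+1 : ℕ)) (u+1)
        = (x-1) * (1 / poch (x - ((u+1:ℕ)+1 : ℕ)) ((u+1)+1))
      have hb : poch (x - ((u+1:ℕ)+1 : ℕ)) ((u+1)+1)
          = poch ((x-1) - ((u:ℕ)+1:ℕ)) (u+1) * (x - 1) := by
        rw [poch_succ]
        congr 1
        · congr 1; push_cast; ring
        · push_cast; ring
      rw [hb]
      have : (x-1) * (1 / (poch ((x-1) - ((u:ℕ)+1:ℕ)) (u+1) * (x-1)))
          = ((x-1) * 1) / ((x-1) * poch ((x-1) - ((u:ℕ)+1:ℕ)) (u+1)) := by ring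
      rw [this, mul_div_mul_left _ _ hne]

lemma pochZ_add_nat (x : ℂ) (hx : ∀ z : ℤ, x + z ≠ 0) (t : ℤ) :
    ∀ v : ℕ, pochZ x (t + v) = pochZ x t * poch (x + t) v := by
  intro v
  induction v with
  | zero => simp [pochZ_zero, poch_zero]
  | succ v ih =>
    rw [show t + ((v+1 : ℕ) : ℤ) = (t + v) + 1 by push_cast; ring, pochZ_succ x hx, ih,
      poch_succ, mul_assoc]
    congr 2
    push_cast; ring

lemma pochZ_sub_nat (x : ℂ) (hx : ∀ z : ℤ, x + z ≠ 0) (t : ℤ) :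
    ∀ j : ℕ, pochZ (x - j) (t + j) = poch (x - j) j * pochZ x t := by
  intro j
  induction j with
  | zero => simp [poch_zero]
  | succ j ih =>
    have hne : (x - j) - 1 ≠ 0 := by
      have := hx (-(j+1)); intro h; apply this; push_cast; linear_combination h
    have h1 : x - ((j+1:ℕ):ℂ) = (x - j) - 1 := by push_cast; ring
    have h2 : (t + ((j+1:ℕ):ℤ)) = (t + j) + 1 := by push_cast; ring
    rw [h1, h2, pochZ_pred (x - j) hne, ih, poch_succ',
      show x - (j:ℂ) - 1 + 1 = x - j by ring]
    ring

lemma newton (n : ℕ) : ∀ (m : ℕ) (b : ℂ),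
    ∑ k ∈ Finset.range (n+1), (Nat.multichoose m k : ℂ) * (n.descFactorial k : ℂ) *
      poch b (n - k) = poch (b + m) n := by
  intro m
  induction m with
  | zero =>
    intro b
    rw [Finset.sum_eq_single 0]
    · simp [poch]
    · intro k _ hk
      rcases k with _ | k
      · exact absurd rfl hk
      · simp
    · intro h; exact absurd (Finset.mem_range.2 (by omega)) h
  | succ m ih =>
    have key : ∀ c : ℂ,
        ∑ k ∈ Finset.range (n+1), (Nat.multichoose (m+1) k : ℂ) * (n.descFactorial k : ℂ) *
          poch (c-1) (n - k) = poch (c + m) n := by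
      intro c
      have hdiff : ∑ k ∈ Finset.range (n+1), (Nat.multichoose (m+1) k : ℂ) *
            (n.descFactorial k : ℂ) * (poch c (n-k) - poch (c-1) (n-k))
          = ∑ k ∈ Finset.range (n+1),
            ((Nat.multichoose (m+1) k : ℂ) - (Nat.multichoose m k : ℂ)) *
            (n.descFactorial k : ℂ) * poch c (n-k) := by
        rw [Finset.sum_range_succ, Finset.sum_range_succ']
        have hlast : (Nat.multichoose (m+1) n : ℂ) * (n.descFactorial n : ℂ) *
            (poch c (n-n) - poch (c-1) (n-n)) = 0 := by
          simp [poch_zero]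
        have hfirst : ((Nat.multichoose (m+1) 0 : ℂ) - (Nat.multichoose m 0 : ℂ)) *
            (n.descFactorial 0 : ℂ) * poch c (n-0) = 0 := by
          simp [Nat.multichoose_zero_right]
        rw [hlast, hfirst, add_zero, add_zero]
        apply Finset.sum_congr rfl
        intro k hk
        have hkn : k < n := Finset.mem_range.1 hk
        have h1 : poch c (n-k) - poch (c-1) (n-k) = ((n-k : ℕ) : ℂ) * poch c (n-(k+1)) := by
          have h2 : n - k = (n - (k+1)) + 1 := by omega
          rw [h2, poch_diff]
          congr 2
          push_cast [Nat.cast_sub (by omega : k+1 ≤ n), Nat.cast_sub (by omega : k ≤ n)]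
          ring
        have h3 : ((Nat.multichoose (m+1) (k+1) : ℂ) - (Nat.multichoose m (k+1) : ℂ))
            = (Nat.multichoose (m+1) k : ℂ) := by
          rw [Nat.multichoose_succ_succ]
          push_cast; ring
        have h4 : (n.descFactorial (k+1) : ℂ) = ((n-k:ℕ):ℂ) * (n.descFactorial k : ℂ) := by
          rw [Nat.descFactorial_succ]; push_cast; ring
        rw [h1, h3, h4]; ring
      have hsub : ∑ k ∈ Finset.range (n+1), (Nat.multichoose (m+1) k : ℂ) *
            (n.descFactorial k : ℂ) * (poch c (n-k) - poch (c-1) (n-k))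
          = (∑ k ∈ Finset.range (n+1), (Nat.multichoose (m+1) k : ℂ) *
              (n.descFactorial k : ℂ) * poch c (n-k))
            - ∑ k ∈ Finset.range (n+1), (Nat.multichoose (m+1) k : ℂ) *
              (n.descFactorial k : ℂ) * poch (c-1) (n-k) := by
        rw [← Finset.sum_sub_distrib]
        apply Finset.sum_congr rfl
        intro k _; ring
      have hsub2 : ∑ k ∈ Finset.range (n+1),
            ((Nat.multichoose (m+1) k : ℂ) - (Nat.multichoose m k : ℂ)) *
            (n.descFactorial k : ℂ) * poch c (n-k)
          = (∑ k ∈ Finset.range (n+1), (Nat.multichoose (m+1) k : ℂ) *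
              (n.descFactorial k : ℂ) * poch c (n-k)) - poch (c + m) n := by
        rw [← ih c, ← Finset.sum_sub_distrib]
        apply Finset.sum_congr rfl
        intro k _; ring
      have h5 := hdiff
      rw [hsub, hsub2] at h5
      linear_combination -h5
    intro b
    have := key (b + 1)
    rw [show b + 1 - 1 = b by ring] at this
    rw [this]
    congr 1
    push_cast; ring

lemma vand (m k : ℕ) (hk : 1 ≤ k) :
    ∑ l ∈ Finset.range (min k m + 1),
      (if l = 0 then 0 else (k-1).choose (l-1) * m.choose l) = Nat.multichoose m k := by
  rw [Finset.sum_range_succ']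
  simp only [Nat.succ_ne_zero, ite_false, ite_true, add_zero, Nat.succ_sub_one, if_false,
    if_true, Nat.add_sub_cancel, reduceIte]
  have hext : ∑ i ∈ Finset.range (min k m), (k-1).choose i * m.choose (i+1)
      = ∑ i ∈ Finset.range k, (k-1).choose i * m.choose (i+1) := by
    apply Finset.sum_subset (Finset.range_subset_range.2 (min_le_left k m))
    intro i hi hni
    have hik := Finset.mem_range.1 hi
    have him : min k m ≤ i := by
      by_contra h
      exact hni (Finset.mem_range.2 (by omega))
    rw [Nat.choose_eq_zero_of_lt (show m < i+1 by omega), Nat.mul_zero]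
  rw [hext]
  have hv : Nat.multichoose m k = ∑ i ∈ Finset.range (k+1), m.choose i * (k-1).choose (k-i) := by
    rw [Nat.multichoose_eq, show m + k - 1 = m + (k-1) by omega, Nat.add_choose_eq,
      Finset.Nat.sum_antidiagonal_eq_sum_range_succ_mk]
  rw [hv, Finset.sum_range_succ']
  rw [Nat.sub_zero, Nat.choose_eq_zero_of_lt (show k-1 < k by omega), Nat.mul_zero, add_zero]
  apply Finset.sum_congr rfl
  intro i hi
  have hik := Finset.mem_range.1 hi
  rw [show k - (i+1) = (k-1) - i by omega, Nat.choose_symm (by omega), Nat.mul_comm]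

/-- Coefficientwise form of the inverse decomposition formula (3.26). -/
theorem H5_inverse_decomposition (a : ℂ) (ha : ∀ z : ℤ, a ≠ (z : ℂ)) (m n : ℕ) :
    poch a m / poch (1 - a) n =
      ∑ k ∈ Finset.range (n + 1), ∑ l ∈ Finset.range (min k m + 1),
        cCoeff k l * (-1 : ℂ) ^ (n - l) *
          ((m.factorial : ℂ) / ((m - l).factorial : ℂ)) *
          ((n.factorial : ℂ) / ((n - k).factorial : ℂ)) *
          pochZ (a - k + l) (((m : ℤ) - l) - ((n : ℤ) - k)) /
          (poch (1 - a) k * poch (1 - a) (k - l)) := by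
  have hxa : ∀ z : ℤ, a + z ≠ 0 := fun z h => ha (-z) (by push_cast; linear_combination h)
  have hpne : ∀ (c : ℤ) (y : ℂ), y = a + c → ∀ k, poch y k ≠ 0 := by
    intro c y hy k
    subst hy
    apply poch_ne_zero
    intro i h
    exact ha (-(c+i)) (by push_cast; linear_combination h)
  have hqne : ∀ (c : ℤ) (y : ℂ), y = c - a → ∀ k, poch y k ≠ 0 := by
    intro c y hy k
    subst hy
    apply poch_ne_zero
    intro i h
    exact ha (c+i) (by push_cast; linear_combination -h)
  have hfac : ∀ j : ℕ, (j.factorial : ℂ) ≠ 0 :=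
    fun j => Nat.cast_ne_zero.2 (Nat.factorial_ne_zero j)
  have step1 : ∀ k ∈ Finset.range (n+1),
      (∑ l ∈ Finset.range (min k m + 1),
        cCoeff k l * (-1 : ℂ) ^ (n - l) *
          ((m.factorial : ℂ) / ((m - l).factorial : ℂ)) *
          ((n.factorial : ℂ) / ((n - k).factorial : ℂ)) *
          pochZ (a - k + l) (((m : ℤ) - l) - ((n : ℤ) - k)) /
          (poch (1 - a) k * poch (1 - a) (k - l)))
      = (Nat.multichoose m k : ℂ) * ((-1:ℂ)^(n-k) *
          ((n.factorial : ℂ) / ((n-k).factorial : ℂ)) *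
          pochZ a ((m:ℤ) - (n:ℤ)) / poch (1-a) k) := by
    intro k hk
    have hkn : k ≤ n := by have := Finset.mem_range.1 hk; omega
    rcases Nat.eq_zero_or_pos k with hk0 | hk1
    · subst hk0
      rw [show min 0 m = 0 by omega, Finset.sum_range_one,
        show a - ((0:ℕ):ℂ) + ((0:ℕ):ℂ) = a by push_cast; ring,
        show (m:ℤ) - ((0:ℕ):ℤ) - ((n:ℤ) - ((0:ℕ):ℤ)) = (m:ℤ) - (n:ℤ) by push_cast; ring]
      norm_num [cCoeff, poch_zero, Nat.multichoose_zero_right]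
      exact Or.inl (Or.inl (Nat.factorial_ne_zero m))
    · have hkz : k ≠ 0 := by omega
      have e1 : ∀ l ∈ Finset.range (min k m + 1),
          cCoeff k l * (-1 : ℂ) ^ (n - l) *
            ((m.factorial : ℂ) / ((m - l).factorial : ℂ)) *
            ((n.factorial : ℂ) / ((n - k).factorial : ℂ)) *
            pochZ (a - k + l) (((m : ℤ) - l) - ((n : ℤ) - k)) /
            (poch (1 - a) k * poch (1 - a) (k - l))
          = ((if l = 0 then 0 else (k-1).choose (l-1) * m.choose l : ℕ) : ℂ) *
            ((-1:ℂ)^(n-k) * ((n.factorial : ℂ) / ((n-k).factorial : ℂ)) *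
              pochZ a ((m:ℤ) - (n:ℤ)) / poch (1-a) k) := by
        intro l hl
        have hlmin : l ≤ min k m := by have := Finset.mem_range.1 hl; omega
        have hlk : l ≤ k := le_trans hlmin (min_le_left _ _)
        have hlm : l ≤ m := le_trans hlmin (min_le_right _ _)
        rcases Nat.eq_zero_or_pos l with hl0 | hl1
        · subst hl0
          simp [cCoeff, hkz]
        · have hlz : l ≠ 0 := by omega
          have hF1 : pochZ (a - k + l) (((m : ℤ) - l) - ((n : ℤ) - k))
              = poch (a - ((k-l:ℕ):ℂ)) (k-l) * pochZ a ((m:ℤ) - (n:ℤ)) := by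
            rw [show a - (k:ℂ) + l = a - ((k-l:ℕ):ℂ) by
                push_cast [Nat.cast_sub hlk]; ring,
              show ((m : ℤ) - l) - ((n : ℤ) - k) = ((m:ℤ) - (n:ℤ)) + ((k-l:ℕ):ℤ) by
                push_cast [Nat.cast_sub hlk]; ring]
            exact pochZ_sub_nat a hxa _ (k-l)
          have hF2 : poch (1-a) (k-l) = (-1:ℂ)^(k-l) * poch (a - ((k-l:ℕ):ℂ)) (k-l) := by
            rw [poch_reflect (1-a) (k-l), show 1 - (1-a) - ((k-l:ℕ):ℂ) = a - ((k-l:ℕ):ℂ) by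
              ring]
          have hF3 : (-1:ℂ)^(n-l) = (-1:ℂ)^(n-k) * (-1:ℂ)^(k-l) := by
            rw [← pow_add]
            congr 1
            omega
          have hPne : poch (a - ((k-l:ℕ):ℂ)) (k-l) ≠ 0 :=
            hpne (-((k-l:ℕ):ℤ)) _ (by push_cast; ring) _
          have hQne : poch (1-a) k ≠ 0 := hqne 1 _ (by norm_num) _
          rw [hF1, hF2, hF3, if_neg hlz, Nat.cast_mul]
          simp only [cCoeff, if_neg hkz, if_neg hlz]
          have hcomb : (((k-1).choose (l-1) : ℕ) : ℂ) * ((m.choose l : ℕ) : ℂ)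
              = (((k-1).factorial : ℂ) /
                  (((l-1).factorial : ℂ) * (l.factorial : ℂ) * ((k-l).factorial : ℂ))) *
                ((m.factorial : ℂ) / ((m-l).factorial : ℂ)) := by
            rw [Nat.cast_choose ℂ (show l-1 ≤ k-1 by omega), Nat.cast_choose ℂ hlm,
              show (k-1) - (l-1) = k - l by omega]
            field_simp [hfac]
          rw [hcomb]
          have hS2 : ((-1:ℂ))^(k-l) ≠ 0 := pow_ne_zero _ (by norm_num)
          generalize (((k-1).factorial : ℂ) /
              (((l-1).factorial : ℂ) * (l.factorial : ℂ) * ((k-l).factorial : ℂ))) = W1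
          generalize ((m.factorial : ℂ) / ((m-l).factorial : ℂ)) = W2
          generalize ((n.factorial : ℂ) / ((n-k).factorial : ℂ)) = W3
          generalize hP : poch (a - ((k-l:ℕ):ℂ)) (k-l) = P at hPne ⊢
          generalize hQ : poch (1-a) k = Q at hQne ⊢
          generalize hZ : pochZ a ((m:ℤ) - (n:ℤ)) = Z
          generalize hS : ((-1:ℂ))^(k-l) = S at hS2 ⊢
          generalize ((-1:ℂ))^(n-k) = S1
          field_simp
      rw [Finset.sum_congr rfl e1, ← Finset.sum_mul, ← Nat.cast_sum, vand m k hk1]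
  rw [Finset.sum_congr rfl step1]
  have step2 : ∀ k ∈ Finset.range (n+1),
      (Nat.multichoose m k : ℂ) * ((-1:ℂ)^(n-k) *
          ((n.factorial : ℂ) / ((n-k).factorial : ℂ)) *
          pochZ a ((m:ℤ) - (n:ℤ)) / poch (1-a) k)
      = ((Nat.multichoose m k : ℂ) * (n.descFactorial k : ℂ) * poch (a - n) (n - k)) *
          (pochZ a ((m:ℤ) - (n:ℤ)) / poch (1-a) n) := by
    intro k hk
    have hkn : k ≤ n := by have := Finset.mem_range.1 hk; omega
    have hG1 : ((n.factorial : ℂ)) = ((n-k).factorial : ℂ) * (n.descFactorial k : ℂ) := by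
      exact_mod_cast congrArg (Nat.cast (R := ℂ))
        (Nat.factorial_mul_descFactorial hkn).symm
    have hG2 : poch (1-a) n = poch (1-a) k * poch (1-a+(k:ℂ)) (n-k) := by
      have h := poch_add (1-a) k (n-k)
      rw [show k + (n-k) = n by omega] at h
      exact h
    have hG3 : poch (1-a+(k:ℂ)) (n-k) = (-1:ℂ)^(n-k) * poch (a - n) (n - k) := by
      rw [poch_reflect (1-a+(k:ℂ)) (n-k),
        show 1 - (1-a+(k:ℂ)) - ((n-k:ℕ):ℂ) = a - n by
          push_cast [Nat.cast_sub hkn]; ring]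
    have hQk : poch (1-a) k ≠ 0 := hqne 1 _ (by norm_num) _
    have hQn : poch (1-a) n ≠ 0 := hqne 1 _ (by norm_num) _
    have hRne : poch (a - n) (n-k) ≠ 0 := hpne (-(n:ℤ)) _ (by push_cast; ring) _
    have hS : ((-1:ℂ))^(n-k) ≠ 0 := pow_ne_zero _ (by norm_num)
    rw [hG1, hG2, hG3]
    field_simp [hQk, hRne, hS, hfac]
    have he : ((-1:ℂ))^(n-k) * ((-1:ℂ))^(n-k) = 1 := by
      rw [← pow_add]
      exact Even.neg_one_pow ⟨n-k, by ring⟩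
    linear_combination ((m.multichoose k : ℂ) * (n.descFactorial k : ℂ) *
      pochZ a ((m:ℤ)-(n:ℤ))) * he
  rw [Finset.sum_congr rfl step2, ← Finset.sum_mul, newton n m (a - n)]
  have hsplit : poch a m = pochZ a ((m:ℤ) - (n:ℤ)) * poch (a - n + m) n := by
    rw [← pochZ_natCast a m, show ((m:ℕ):ℤ) = ((m:ℤ) - (n:ℤ)) + ((n:ℕ):ℤ) by push_cast; ring,
      pochZ_add_nat a hxa _ n, show a + (((m:ℤ) - (n:ℤ) : ℤ):ℂ) = a - n + m by push_cast; ring,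
      show (m:ℤ) - ↑n + ↑n - ↑n = (m:ℤ) - ↑n by ring]
  rw [hsplit]
  ring
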